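/- Let F be a finite field and m ≥ 1. The lattice of subspaces of F^m is paraorthomodular: for all subspaces U, W of F^m, if U ⊆ W and U^⊥ ∩ W = {0}, then U = W. -/

import Mathlib

/-- The dot product on `Fin m → F`. -/
def dot {F : Type} [Field F] {m : ℕ} (a b : Fin m → F) : F := ∑ i, a i * b i

/-- The orthogonal complement of a subspace of `Fin m → F` w.r.t. the dot product. -/
def perp {F : Type} [Field F] {m : ℕ} (U : Submodule F (Fin m → F)) :
    Submodule F (Fin m → F) where
  carrier := {x | ∀ y ∈ U, dot x y = 0}
  add_mem' := by
    intro a b ha hb y hy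
    simp only [Set.mem_setOf_eq, dot] at *
    simp [add_mul, Finset.sum_add_distrib, ha y hy, hb y hy]
  zero_mem' := by intro y hy; simp [dot]
  smul_mem' := by
    intro c a ha y hy
    simp only [Set.mem_setOf_eq, dot] at *
    simp [mul_assoc, ← Finset.mul_sum, ha y hy]


noncomputable def dotB {F : Type} [Field F] {m : ℕ} : LinearMap.BilinForm F (Fin m → F) :=
  Matrix.toLinearMap₂' F (1 : Matrix (Fin m) (Fin m) F)

lemma dotB_apply {F : Type} [Field F] {m : ℕ} (x y : Fin m → F) :
    dotB x y = ∑ i, x i * y i := by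
  simp [dotB, Matrix.toLinearMap₂'_apply', dotProduct]

lemma dotB_symm {F : Type} [Field F] {m : ℕ} (x y : Fin m → F) : dotB x y = dotB y x := by
  simp [dotB_apply, mul_comm]

lemma dotB_refl {F : Type} [Field F] {m : ℕ} : (dotB (F := F) (m := m)).IsRefl := by
  intro x y h; rwa [← dotB_symm]

lemma dotB_nondeg {F : Type} [Field F] {m : ℕ} : (dotB (F := F) (m := m)).Nondegenerate := by
  constructor
  · intro x hx
    funext i
    have := hx (Pi.single i 1)
    simpa [dotB_apply, Pi.single_apply, Finset.sum_ite_eq'] using this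
  · intro x hx
    funext i
    have := hx (Pi.single i 1)
    simpa [dotB_apply, Pi.single_apply, Finset.sum_ite_eq] using this

lemma perp_eq_orthogonal {F : Type} [Field F] {m : ℕ} (U : Submodule F (Fin m → F)) :
    perp U = dotB.orthogonal U := by
  ext x
  simp only [perp, Submodule.mem_mk, AddSubmonoid.mem_mk, AddSubsemigroup.mem_mk,
    Set.mem_setOf_eq, LinearMap.BilinForm.mem_orthogonal_iff, LinearMap.BilinForm.IsOrtho]
  constructor
  · intro h y hy; rw [dotB_symm, dotB_apply]; exact h y hy
  · intro h y hy; have := h y hy; rwa [dotB_symm, dotB_apply] at this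

/-- the lattice of subspaces of `F^m` is paraorthomodular. -/
theorem paraorthomodular
    {F : Type} [Field F] [Fintype F] {m : ℕ} (hm : 1 ≤ m)
    (U W : Submodule F (Fin m → F)) (hUW : U ≤ W) (h : perp U ⊓ W = ⊥) :
    U = W := by
  have hfin : Module.finrank F (perp U) = m - Module.finrank F U := by
    rw [perp_eq_orthogonal, LinearMap.BilinForm.finrank_orthogonal dotB_nondeg]
    simp
  have hsum := Submodule.finrank_sup_add_finrank_inf_eq (perp U) W
  rw [h, finrank_bot, add_zero] at hsum
  have hle : Module.finrank F ((perp U) ⊔ W : Submodule F (Fin m → F)) ≤ m := by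
    simpa using Submodule.finrank_le ((perp U) ⊔ W)
  have hU : Module.finrank F U ≤ m := by simpa using Submodule.finrank_le U
  have : Module.finrank F W ≤ Module.finrank F U := by omega
  exact Submodule.eq_of_le_of_finrank_le hUW this
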